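/- On each of the six-dimensional real Lie algebras 𝔨₁^{-1/2,-1/2}, 𝔨₈^{p,-p/2,0} (p≠0), 𝔨₈^{p,-p/2,-p/2} (p≠0), 𝔨₁₁^{p,-p/2,0,s} (p≠0, 1≥|s|>0), 𝔨₁₁^{p,-p/2,-p/2,s} (p≠0, 1≥|s|>0), 𝔨₁₇^{-1/2}, 𝔨₁₉^{p,-p/2} (p≠0) (structure equations as in the paper's Theorem on split generalized Kähler almost abelian Lie algebras), the triple (J₊,J₋,g) defined on the basis f₁,…,f₆ by J₊f₁ = f₆, J₊f₂ = f₃, J₊f₃ = -f₂, J₊f₄ = f₅, J₊f₅ = -f₄, J₊f₆ = -f₁; J₋f₁ = f₆, J₋f₂ = -f₃, J₋f₃ = f₂, J₋f₄ = -f₅, J₋f₅ = f₄, J₋f₆ = -f₁; g = Σᵢ fⁱ⊗fⁱ, is a split generalized Kähler structure (both J± are integrable, g is Hermitian for both, dᶜ₊ω₊ + dᶜ₋ω₋ = 0, d(dᶜ₊ω₊) = 0, and J₊J₋ = J₋J₊). Moreover the torsion 3-form H = dᶜ₊ω₊ equals: f^{123} for 𝔨₁₇^{-1/2}; p·f^{123}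 for 𝔨₁₉^{p,-p/2}, 𝔨₈^{p,-p/2,0} and 𝔨₁₁^{p,-p/2,0,s}; f^{123}+f^{145} for 𝔨₁^{-1/2,-1/2}; p·f^{123}+p·f^{145} for 𝔨₈^{p,-p/2,-p/2} and 𝔨₁₁^{p,-p/2,-p/2,s}. In particular H ≠ 0 in each case. -/

import Mathlib

set_option maxHeartbeats 1000000
noncomputable section

/-- The underlying vector space of a six-dimensional real Lie algebra. -/
abbrev V6 : Type := Fin 6 → ℝ

/-- The Lie bracket of the almost abelian Lie algebra determined by the matrix `A` of
`ad_{f₆}` (column `j` of `A` lists the coordinates of `[f₆, f_{j+1}]`; the ideal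
`span{f₁,…,f₅}` is abelian). -/
def braa (A : Matrix (Fin 6) (Fin 6) ℝ) : V6 →ₗ[ℝ] V6 →ₗ[ℝ] V6 :=
  LinearMap.mk₂ ℝ (fun x y => x 5 • A.mulVec y - y 5 • A.mulVec x)
    (by intro x x' y; simp [Matrix.mulVec_add, Pi.add_apply, add_smul, smul_add]; module)
    (by intro c x y; simp [Matrix.mulVec_smul, Pi.smul_apply, smul_eq_mul, mul_smul]; module)
    (by intro x y y'; simp [Matrix.mulVec_add, smul_add, add_smul]; module)
    (by intro c x y; simp [Matrix.mulVec_smul, Pi.smul_apply, smul_eq_mul, mul_smul]; module)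

/-- The bilinear form on `V6` determined by a matrix `G`. -/
def gOf (G : Matrix (Fin 6) (Fin 6) ℝ) : V6 →ₗ[ℝ] V6 →ₗ[ℝ] ℝ :=
  LinearMap.mk₂ ℝ (fun x y => dotProduct x (G.mulVec y))
    (by intro x x' y; simp [add_dotProduct])
    (by intro c x y; simp [smul_dotProduct, smul_eq_mul])
    (by intro x y y'; simp [Matrix.mulVec_add, dotProduct_add])
    (by intro c x y; simp [Matrix.mulVec_smul, dotProduct_smul, smul_eq_mul])

/-- The standard inner product, making `f₁,…,f₆` orthonormal. -/
def gstd : V6 →ₗ[ℝ] V6 →ₗ[ℝ] ℝ := gOf 1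

/-- The linear endomorphism of `V6` determined by a matrix. -/
def endOf (M : Matrix (Fin 6) (Fin 6) ℝ) : V6 →ₗ[ℝ] V6 := Matrix.toLin' M

/-- `br` is a Lie bracket: antisymmetric and satisfying the Jacobi identity
(bilinearity is built into the type). -/
def IsBracket (br : V6 →ₗ[ℝ] V6 →ₗ[ℝ] V6) : Prop :=
  (∀ x y, br x y = - br y x) ∧
  (∀ x y z, br (br x y) z + br (br y z) x + br (br z x) y = 0)

/-- The Lie algebra has an abelian ideal of codimension one. -/
def IsAlmostAbelian (br : V6 →ₗ[ℝ] V6 →ₗ[ℝ] V6) : Prop :=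
  ∃ h : Submodule ℝ V6, Module.finrank ℝ h = 5 ∧
    (∀ x ∈ h, ∀ y ∈ h, br x y = 0) ∧ (∀ x : V6, ∀ y ∈ h, br x y ∈ h)

/-- Nilpotency of the Lie algebra: some length of iterated brackets
`[x₁,[x₂,…,[xₙ,y]…]]` always vanishes. -/
def IsNilpotentBr (br : V6 →ₗ[ℝ] V6 →ₗ[ℝ] V6) : Prop :=
  ∃ n : ℕ, ∀ x : Fin n → V6, ∀ y : V6, (List.ofFn x).foldr (fun a b => br a b) y = 0

/-- The Nijenhuis tensor of `J`. -/
def Nij (br : V6 →ₗ[ℝ] V6 →ₗ[ℝ] V6) (J : V6 →ₗ[ℝ] V6) (x y : V6) : V6 :=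
  br (J x) (J y) - br x y - J (br (J x) y) - J (br x (J y))

/-- A complex structure: `J ∘ J = -id` with vanishing Nijenhuis tensor. -/
def IsCpxStr (br : V6 →ₗ[ℝ] V6 →ₗ[ℝ] V6) (J : V6 →ₗ[ℝ] V6) : Prop :=
  (∀ x, J (J x) = -x) ∧ (∀ x y, Nij br J x y = 0)

/-- A Hermitian structure: a complex structure together with a positive-definite
compatible inner product. -/
def IsHermStr (br : V6 →ₗ[ℝ] V6 →ₗ[ℝ] V6) (J : V6 →ₗ[ℝ] V6)
    (g : V6 →ₗ[ℝ] V6 →ₗ[ℝ] ℝ) : Prop :=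
  IsCpxStr br J ∧ (∀ x y, g x y = g y x) ∧ (∀ x, x ≠ 0 → 0 < g x x) ∧
    (∀ x y, g (J x) (J y) = g x y)

/-- The fundamental form `ω = g(J·,·)`. -/
def fund (J : V6 →ₗ[ℝ] V6) (g : V6 →ₗ[ℝ] V6 →ₗ[ℝ] ℝ) : V6 → V6 → ℝ :=
  fun x y => g (J x) y

/-- The Chevalley–Eilenberg differential of a 2-form. -/
def d2 (br : V6 →ₗ[ℝ] V6 →ₗ[ℝ] V6) (ω : V6 → V6 → ℝ) : V6 → V6 → V6 → ℝ :=
  fun x y z => -ω (br x y) z + ω (br x z) y - ω (br y z) x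

/-- The Chevalley–Eilenberg differential of a 3-form. -/
def d3 (br : V6 →ₗ[ℝ] V6 →ₗ[ℝ] V6) (H : V6 → V6 → V6 → ℝ) : V6 → V6 → V6 → V6 → ℝ :=
  fun x y z w => -H (br x y) z w + H (br x z) y w - H (br x w) y z
    - H (br y z) x w + H (br y w) x z - H (br z w) x y

/-- The form `dᶜω`, where `dᶜω(X,Y,Z) = dω(JX,JY,JZ)` and `ω = g(J·,·)`. -/
def dC (br : V6 →ₗ[ℝ] V6 →ₗ[ℝ] V6) (J : V6 →ₗ[ℝ] V6)
    (g : V6 →ₗ[ℝ] V6 →ₗ[ℝ] ℝ) : V6 → V6 → V6 → ℝ :=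
  fun x y z => d2 br (fund J g) (J x) (J y) (J z)

/-- A Kähler structure: a Hermitian structure with closed fundamental form. -/
def IsKahlerStr (br : V6 →ₗ[ℝ] V6 →ₗ[ℝ] V6) (J : V6 →ₗ[ℝ] V6)
    (g : V6 →ₗ[ℝ] V6 →ₗ[ℝ] ℝ) : Prop :=
  IsHermStr br J g ∧ ∀ x y z, d2 br (fund J g) x y z = 0

/-- An SKT (pluriclosed) structure: a Hermitian structure with `d(dᶜω) = 0`. -/
def IsSKTStr (br : V6 →ₗ[ℝ] V6 →ₗ[ℝ] V6) (J : V6 →ₗ[ℝ] V6)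
    (g : V6 →ₗ[ℝ] V6 →ₗ[ℝ] ℝ) : Prop :=
  IsHermStr br J g ∧ ∀ x y z w, d3 br (dC br J g) x y z w = 0

/-- A generalized Kähler structure `(J₊, J₋, g)`. -/
def IsGenKahler (br : V6 →ₗ[ℝ] V6 →ₗ[ℝ] V6) (Jp Jm : V6 →ₗ[ℝ] V6)
    (g : V6 →ₗ[ℝ] V6 →ₗ[ℝ] ℝ) : Prop :=
  IsHermStr br Jp g ∧ IsHermStr br Jm g ∧
    (∀ x y z, dC br Jp g x y z + dC br Jm g x y z = 0) ∧
    (∀ x y z w, d3 br (dC br Jp g) x y z w = 0)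

/-- Unimodularity: every adjoint operator is traceless. -/
def Unimodular (br : V6 →ₗ[ℝ] V6 →ₗ[ℝ] V6) : Prop :=
  ∀ x : V6, LinearMap.trace ℝ V6 (br x) = 0

/-- Isomorphism of Lie algebra structures on `V6`. -/
def LieIso (br br' : V6 →ₗ[ℝ] V6 →ₗ[ℝ] V6) : Prop :=
  ∃ φ : V6 ≃ₗ[ℝ] V6, ∀ x y, φ (br x y) = br' (φ x) (φ y)

/-- The basis 3-form `fⁱ ∧ fʲ ∧ f^k`. -/
def tri (i j k : Fin 6) : V6 → V6 → V6 → ℝ := fun x y z =>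
  Matrix.det !![x i, x j, x k; y i, y j, y k; z i, z j, z k]

/-- The complex structure `J f₁ = f₆`, `J f₂ = f₃`, `J f₃ = -f₂`, `J f₄ = f₅`,
`J f₅ = -f₄`, `J f₆ = -f₁`. -/
def JP : V6 →ₗ[ℝ] V6 :=
  endOf !![0,0,0,0,0,-1; 0,0,-1,0,0,0; 0,1,0,0,0,0; 0,0,0,0,-1,0; 0,0,0,1,0,0; 1,0,0,0,0,0]

/-- The complex structure `J₋ f₁ = f₆`, `J₋ f₂ = -f₃`, `J₋ f₃ = f₂`, `J₋ f₄ = -f₅`,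
`J₋ f₅ = f₄`, `J₋ f₆ = -f₁`. -/
def JM : V6 →ₗ[ℝ] V6 :=
  endOf !![0,0,0,0,0,-1; 0,0,1,0,0,0; 0,-1,0,0,0,0; 0,0,0,0,1,0; 0,0,0,-1,0,0; 1,0,0,0,0,0]

/-- The Lie algebra `𝔨₁^{p,r}`. -/
def k1 (p r : ℝ) : V6 →ₗ[ℝ] V6 →ₗ[ℝ] V6 :=
  braa !![1,0,0,0,0,0; 0,p,0,0,0,0; 0,0,p,0,0,0; 0,0,0,r,0,0; 0,0,0,0,r,0; 0,0,0,0,0,0]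

/-- The Lie algebra `𝔨₈^{p,q,s}`. -/
def k8 (p q s : ℝ) : V6 →ₗ[ℝ] V6 →ₗ[ℝ] V6 :=
  braa !![p,0,0,0,0,0; 0,q,0,0,0,0; 0,0,q,0,0,0; 0,0,0,s,1,0; 0,0,0,-1,s,0; 0,0,0,0,0,0]

/-- The Lie algebra `𝔨₁₁^{p,q,r,s}`. -/
def k11 (p q r s : ℝ) : V6 →ₗ[ℝ] V6 →ₗ[ℝ] V6 :=
  braa !![p,0,0,0,0,0; 0,q,1,0,0,0; 0,-1,q,0,0,0; 0,0,0,r,s,0; 0,0,0,-s,r,0; 0,0,0,0,0,0]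

/-- The Lie algebra `𝔨₁₇^p`. -/
def k17 (p : ℝ) : V6 →ₗ[ℝ] V6 →ₗ[ℝ] V6 :=
  braa !![1,0,0,0,0,0; 0,p,0,0,0,0; 0,0,p,0,0,0; 0,0,0,0,0,0; 0,0,0,0,0,0; 0,0,0,0,0,0]

/-- The Lie algebra `𝔨₁₉^{p,q}`. -/
def k19 (p q : ℝ) : V6 →ₗ[ℝ] V6 →ₗ[ℝ] V6 :=
  braa !![p,0,0,0,0,0; 0,q,1,0,0,0; 0,-1,q,0,0,0; 0,0,0,0,0,0; 0,0,0,0,0,0; 0,0,0,0,0,0]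

/-- The claim verified family by family: `(JP, JM, gstd)` is a split generalized Kähler
structure with torsion 3-form `h`, and `h ≠ 0`. -/
def GKclaim (b : V6 →ₗ[ℝ] V6 →ₗ[ℝ] V6) (h : V6 → V6 → V6 → ℝ) : Prop :=
  IsGenKahler b JP JM gstd ∧ (∀ x, JP (JM x) = JM (JP x)) ∧
    (∀ x y z, dC b JP gstd x y z = h x y z) ∧ (∃ x y z, h x y z ≠ 0)


@[simp] lemma vec3_app0 {α : Type*} (a0 a1 a2 : α) : ![a0,a1,a2] 0 = a0 := rfl
@[simp] lemma vec3_app1 {α : Type*} (a0 a1 a2 : α) : ![a0,a1,a2] 1 = a1 := rfl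
@[simp] lemma vec3_app2 {α : Type*} (a0 a1 a2 : α) : ![a0,a1,a2] 2 = a2 := rfl

@[simp] lemma vec6_app0 {α : Type*} (a0 a1 a2 a3 a4 a5 : α) :
    ![a0,a1,a2,a3,a4,a5] 0 = a0 := rfl
@[simp] lemma vec6_app1 {α : Type*} (a0 a1 a2 a3 a4 a5 : α) :
    ![a0,a1,a2,a3,a4,a5] 1 = a1 := rfl
@[simp] lemma vec6_app2 {α : Type*} (a0 a1 a2 a3 a4 a5 : α) :
    ![a0,a1,a2,a3,a4,a5] 2 = a2 := rfl
@[simp] lemma vec6_app3 {α : Type*} (a0 a1 a2 a3 a4 a5 : α) :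
    ![a0,a1,a2,a3,a4,a5] 3 = a3 := rfl
@[simp] lemma vec6_app4 {α : Type*} (a0 a1 a2 a3 a4 a5 : α) :
    ![a0,a1,a2,a3,a4,a5] 4 = a4 := rfl
@[simp] lemma vec6_app5 {α : Type*} (a0 a1 a2 a3 a4 a5 : α) :
    ![a0,a1,a2,a3,a4,a5] 5 = a5 := rfl

lemma V6ext (u v : V6) (h0 : u 0 = v 0) (h1 : u 1 = v 1) (h2 : u 2 = v 2)
    (h3 : u 3 = v 3) (h4 : u 4 = v 4) (h5 : u 5 = v 5) : u = v := by
  funext i; fin_cases i <;> assumption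

def MA (a c d e : ℝ) : Matrix (Fin 6) (Fin 6) ℝ :=
  !![a,0,0,0,0,0; 0,-a/2,c,0,0,0; 0,-c,-a/2,0,0,0; 0,0,0,d,e,0; 0,0,0,-e,d,0; 0,0,0,0,0,0]

lemma br0 (a c d e : ℝ) (x y : V6) : braa (MA a c d e) x y 0 = x 5 * (a * y 0) - y 5 * (a * x 0) := by
  simp only [braa, LinearMap.mk₂_apply, Pi.sub_apply, Pi.smul_apply, smul_eq_mul, MA, Matrix.mulVec, dotProduct, Fin.sum_univ_six, Matrix.of_apply, vec6_app0, vec6_app1, vec6_app2, vec6_app3, vec6_app4, vec6_app5]; try ring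

lemma br1 (a c d e : ℝ) (x y : V6) : braa (MA a c d e) x y 1 = x 5 * (-(a/2) * y 1 + c * y 2) - y 5 * (-(a/2) * x 1 + c * x 2) := by
  simp only [braa, LinearMap.mk₂_apply, Pi.sub_apply, Pi.smul_apply, smul_eq_mul, MA, Matrix.mulVec, dotProduct, Fin.sum_univ_six, Matrix.of_apply, vec6_app0, vec6_app1, vec6_app2, vec6_app3, vec6_app4, vec6_app5]; try ring

lemma br2 (a c d e : ℝ) (x y : V6) : braa (MA a c d e) x y 2 = x 5 * (-c * y 1 + -(a/2) * y 2) - y 5 * (-c * x 1 + -(a/2) * x 2) := by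
  simp only [braa, LinearMap.mk₂_apply, Pi.sub_apply, Pi.smul_apply, smul_eq_mul, MA, Matrix.mulVec, dotProduct, Fin.sum_univ_six, Matrix.of_apply, vec6_app0, vec6_app1, vec6_app2, vec6_app3, vec6_app4, vec6_app5]; try ring

lemma br3 (a c d e : ℝ) (x y : V6) : braa (MA a c d e) x y 3 = x 5 * (d * y 3 + e * y 4) - y 5 * (d * x 3 + e * x 4) := by
  simp only [braa, LinearMap.mk₂_apply, Pi.sub_apply, Pi.smul_apply, smul_eq_mul, MA, Matrix.mulVec, dotProduct, Fin.sum_univ_six, Matrix.of_apply, vec6_app0, vec6_app1, vec6_app2, vec6_app3, vec6_app4, vec6_app5]; try ring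

lemma br4 (a c d e : ℝ) (x y : V6) : braa (MA a c d e) x y 4 = x 5 * (-e * y 3 + d * y 4) - y 5 * (-e * x 3 + d * x 4) := by
  simp only [braa, LinearMap.mk₂_apply, Pi.sub_apply, Pi.smul_apply, smul_eq_mul, MA, Matrix.mulVec, dotProduct, Fin.sum_univ_six, Matrix.of_apply, vec6_app0, vec6_app1, vec6_app2, vec6_app3, vec6_app4, vec6_app5]; try ring

lemma br5 (a c d e : ℝ) (x y : V6) : braa (MA a c d e) x y 5 = 0 := by
  simp only [braa, LinearMap.mk₂_apply, Pi.sub_apply, Pi.smul_apply, smul_eq_mul, MA, Matrix.mulVec, dotProduct, Fin.sum_univ_six, Matrix.of_apply, vec6_app0, vec6_app1, vec6_app2, vec6_app3, vec6_app4, vec6_app5]; try ring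

lemma jp0 (x : V6) : JP x 0 = -x 5 := by
  simp only [JP, endOf, Matrix.toLin'_apply, Matrix.mulVec, dotProduct, Fin.sum_univ_six, Matrix.of_apply, vec6_app0, vec6_app1, vec6_app2, vec6_app3, vec6_app4, vec6_app5]; try ring

lemma jp1 (x : V6) : JP x 1 = -x 2 := by
  simp only [JP, endOf, Matrix.toLin'_apply, Matrix.mulVec, dotProduct, Fin.sum_univ_six, Matrix.of_apply, vec6_app0, vec6_app1, vec6_app2, vec6_app3, vec6_app4, vec6_app5]; try ring

lemma jp2 (x : V6) : JP x 2 = x 1 := by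
  simp only [JP, endOf, Matrix.toLin'_apply, Matrix.mulVec, dotProduct, Fin.sum_univ_six, Matrix.of_apply, vec6_app0, vec6_app1, vec6_app2, vec6_app3, vec6_app4, vec6_app5]; try ring

lemma jp3 (x : V6) : JP x 3 = -x 4 := by
  simp only [JP, endOf, Matrix.toLin'_apply, Matrix.mulVec, dotProduct, Fin.sum_univ_six, Matrix.of_apply, vec6_app0, vec6_app1, vec6_app2, vec6_app3, vec6_app4, vec6_app5]; try ring

lemma jp4 (x : V6) : JP x 4 = x 3 := by
  simp only [JP, endOf, Matrix.toLin'_apply, Matrix.mulVec, dotProduct, Fin.sum_univ_six, Matrix.of_apply, vec6_app0, vec6_app1, vec6_app2, vec6_app3, vec6_app4, vec6_app5]; try ring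

lemma jp5 (x : V6) : JP x 5 = x 0 := by
  simp only [JP, endOf, Matrix.toLin'_apply, Matrix.mulVec, dotProduct, Fin.sum_univ_six, Matrix.of_apply, vec6_app0, vec6_app1, vec6_app2, vec6_app3, vec6_app4, vec6_app5]; try ring

lemma jm0 (x : V6) : JM x 0 = -x 5 := by
  simp only [JM, endOf, Matrix.toLin'_apply, Matrix.mulVec, dotProduct, Fin.sum_univ_six, Matrix.of_apply, vec6_app0, vec6_app1, vec6_app2, vec6_app3, vec6_app4, vec6_app5]; try ring

lemma jm1 (x : V6) : JM x 1 = x 2 := by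
  simp only [JM, endOf, Matrix.toLin'_apply, Matrix.mulVec, dotProduct, Fin.sum_univ_six, Matrix.of_apply, vec6_app0, vec6_app1, vec6_app2, vec6_app3, vec6_app4, vec6_app5]; try ring

lemma jm2 (x : V6) : JM x 2 = -x 1 := by
  simp only [JM, endOf, Matrix.toLin'_apply, Matrix.mulVec, dotProduct, Fin.sum_univ_six, Matrix.of_apply, vec6_app0, vec6_app1, vec6_app2, vec6_app3, vec6_app4, vec6_app5]; try ring

lemma jm3 (x : V6) : JM x 3 = x 4 := by
  simp only [JM, endOf, Matrix.toLin'_apply, Matrix.mulVec, dotProduct, Fin.sum_univ_six, Matrix.of_apply, vec6_app0, vec6_app1, vec6_app2, vec6_app3, vec6_app4, vec6_app5]; try ring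

lemma jm4 (x : V6) : JM x 4 = -x 3 := by
  simp only [JM, endOf, Matrix.toLin'_apply, Matrix.mulVec, dotProduct, Fin.sum_univ_six, Matrix.of_apply, vec6_app0, vec6_app1, vec6_app2, vec6_app3, vec6_app4, vec6_app5]; try ring

lemma jm5 (x : V6) : JM x 5 = x 0 := by
  simp only [JM, endOf, Matrix.toLin'_apply, Matrix.mulVec, dotProduct, Fin.sum_univ_six, Matrix.of_apply, vec6_app0, vec6_app1, vec6_app2, vec6_app3, vec6_app4, vec6_app5]; try ring

lemma gstd_app (x y : V6) : gstd x y =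
    x 0 * y 0 + x 1 * y 1 + x 2 * y 2 + x 3 * y 3 + x 4 * y 4 + x 5 * y 5 := by
  simp [gstd, gOf, Matrix.one_mulVec, dotProduct, Fin.sum_univ_six]

lemma tri_app (i j k : Fin 6) (x y z : V6) : tri i j k x y z =
    x i * y j * z k - x i * y k * z j - x j * y i * z k + x j * y k * z i
      + x k * y i * z j - x k * y j * z i := by
  simp only [tri, Matrix.det_fin_three, Matrix.of_apply, vec3_app0, vec3_app1, vec3_app2]; try ring

lemma gstd_symm (x y : V6) : gstd x y = gstd y x := by rw [gstd_app, gstd_app]; ring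

lemma gstd_pos (x : V6) (hx : x ≠ 0) : 0 < gstd x x := by
  have h1 : ∃ i, x i ≠ 0 := by
    by_contra hc; push_neg at hc; exact hx (funext hc)
  obtain ⟨i, hi⟩ := h1
  have h2 : gstd x x = ∑ j : Fin 6, x j * x j := by
    simp [gstd, gOf, Matrix.one_mulVec, dotProduct]
  rw [h2]
  exact Finset.sum_pos' (fun j _ => mul_self_nonneg _)
    ⟨i, Finset.mem_univ i, mul_self_pos.mpr hi⟩

lemma jp_inv (x : V6) : JP (JP x) = -x := by
  refine V6ext _ _ ?_ ?_ ?_ ?_ ?_ ?_ <;>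
    simp only [jp0, jp1, jp2, jp3, jp4, jp5, Pi.neg_apply, neg_neg]

lemma jm_inv (x : V6) : JM (JM x) = -x := by
  refine V6ext _ _ ?_ ?_ ?_ ?_ ?_ ?_ <;>
    simp only [jm0, jm1, jm2, jm3, jm4, jm5, Pi.neg_apply, neg_neg]

lemma jpjm (x : V6) : JP (JM x) = JM (JP x) := by
  refine V6ext _ _ ?_ ?_ ?_ ?_ ?_ ?_ <;>
    simp only [jp0, jp1, jp2, jp3, jp4, jp5, jm0, jm1, jm2, jm3, jm4, jm5, neg_neg]

lemma gstd_jp (x y : V6) : gstd (JP x) (JP y) = gstd x y := by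
  rw [gstd_app, gstd_app]
  simp only [jp0, jp1, jp2, jp3, jp4, jp5]; ring

lemma gstd_jm (x y : V6) : gstd (JM x) (JM y) = gstd x y := by
  rw [gstd_app, gstd_app]
  simp only [jm0, jm1, jm2, jm3, jm4, jm5]; ring

lemma nijP (a c d e : ℝ) (x y : V6) : Nij (braa (MA a c d e)) JP x y = 0 := by
  refine V6ext _ _ ?_ ?_ ?_ ?_ ?_ ?_ <;>
    (simp only [Nij, dC, d2, d3, fund, Pi.sub_apply, Pi.neg_apply, Pi.zero_apply, br0, br1, br2, br3, br4, br5, jp0, jp1, jp2, jp3, jp4, jp5, jm0, jm1, jm2, jm3, jm4, jm5, gstd_app] <;> try ring)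

lemma nijM (a c d e : ℝ) (x y : V6) : Nij (braa (MA a c d e)) JM x y = 0 := by
  refine V6ext _ _ ?_ ?_ ?_ ?_ ?_ ?_ <;>
    (simp only [Nij, dC, d2, d3, fund, Pi.sub_apply, Pi.neg_apply, Pi.zero_apply, br0, br1, br2, br3, br4, br5, jp0, jp1, jp2, jp3, jp4, jp5, jm0, jm1, jm2, jm3, jm4, jm5, gstd_app] <;> try ring)

lemma hermP (a c d e : ℝ) : IsHermStr (braa (MA a c d e)) JP gstd :=
  ⟨⟨jp_inv, nijP a c d e⟩, gstd_symm, gstd_pos, gstd_jp⟩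

lemma hermM (a c d e : ℝ) : IsHermStr (braa (MA a c d e)) JM gstd :=
  ⟨⟨jm_inv, nijM a c d e⟩, gstd_symm, gstd_pos, gstd_jm⟩

lemma dC_eq (a c d e : ℝ) (x y z : V6) : dC (braa (MA a c d e)) JP gstd x y z =
    a * tri 0 1 2 x y z + (-(2*d)) * tri 0 3 4 x y z := by
  rw [tri_app, tri_app]
  simp only [Nij, dC, d2, d3, fund, Pi.sub_apply, Pi.neg_apply, Pi.zero_apply, br0, br1, br2, br3, br4, br5, jp0, jp1, jp2, jp3, jp4, jp5, jm0, jm1, jm2, jm3, jm4, jm5, gstd_app]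
  ring

lemma dC_sum (a c d e : ℝ) (x y z : V6) :
    dC (braa (MA a c d e)) JP gstd x y z + dC (braa (MA a c d e)) JM gstd x y z = 0 := by
  simp only [Nij, dC, d2, d3, fund, Pi.sub_apply, Pi.neg_apply, Pi.zero_apply, br0, br1, br2, br3, br4, br5, jp0, jp1, jp2, jp3, jp4, jp5, jm0, jm1, jm2, jm3, jm4, jm5, gstd_app]
  ring

lemma d3_zero (a c d e : ℝ) (hd : d = 0 ∨ d = -(a/2)) (x y z w : V6) :
    d3 (braa (MA a c d e)) (dC (braa (MA a c d e)) JP gstd) x y z w = 0 := by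
  simp only [Nij, dC, d2, d3, fund, Pi.sub_apply, Pi.neg_apply, Pi.zero_apply, br0, br1, br2, br3, br4, br5, jp0, jp1, jp2, jp3, jp4, jp5, jm0, jm1, jm2, jm3, jm4, jm5, gstd_app]
  rcases hd with h0 | h0 <;> subst h0 <;> ring

lemma master (a c d e : ℝ) (ha : a ≠ 0) (hd : d = 0 ∨ d = -(a/2))
    (h : V6 → V6 → V6 → ℝ)
    (hh : ∀ x y z, h x y z = a * tri 0 1 2 x y z + (-(2*d)) * tri 0 3 4 x y z) :
    GKclaim (braa (MA a c d e)) h := by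
  refine ⟨⟨hermP a c d e, hermM a c d e, dC_sum a c d e, d3_zero a c d e hd⟩,
    jpjm, fun x y z => by rw [dC_eq a c d e, hh], ?_⟩
  refine ⟨![1,0,0,0,0,0], ![0,1,0,0,0,0], ![0,0,1,0,0,0], ?_⟩
  rw [hh, tri_app, tri_app]
  simpa using ha

/-- The explicit split generalized Kähler structures on the seven families of
Lie algebras, with their torsion 3-forms. -/
theorem stmt_15 :
    GKclaim (k1 (-1/2) (-1/2)) (fun x y z => tri 0 1 2 x y z + tri 0 3 4 x y z) ∧
    (∀ p : ℝ, p ≠ 0 →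
      GKclaim (k8 p (-p/2) 0) (fun x y z => p * tri 0 1 2 x y z)) ∧
    (∀ p : ℝ, p ≠ 0 →
      GKclaim (k8 p (-p/2) (-p/2))
        (fun x y z => p * tri 0 1 2 x y z + p * tri 0 3 4 x y z)) ∧
    (∀ p s : ℝ, p ≠ 0 → 1 ≥ |s| → |s| > 0 →
      GKclaim (k11 p (-p/2) 0 s) (fun x y z => p * tri 0 1 2 x y z)) ∧
    (∀ p s : ℝ, p ≠ 0 → 1 ≥ |s| → |s| > 0 →
      GKclaim (k11 p (-p/2) (-p/2) s)
        (fun x y z => p * tri 0 1 2 x y z + p * tri 0 3 4 x y z)) ∧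
    GKclaim (k17 (-1/2)) (fun x y z => tri 0 1 2 x y z) ∧
    (∀ p : ℝ, p ≠ 0 →
      GKclaim (k19 p (-p/2)) (fun x y z => p * tri 0 1 2 x y z)) := by
  refine ⟨?_, ?_, ?_, ?_, ?_, ?_, ?_⟩
  · have hbr : k1 (-1/2) (-1/2) = braa (MA 1 0 (-1/2) 0) := by
      refine LinearMap.ext fun x => LinearMap.ext fun y => V6ext _ _ ?_ ?_ ?_ ?_ ?_ ?_ <;>
        (simp only [k1, k8, k11, k17, k19, braa, LinearMap.mk₂_apply, Pi.sub_apply, Pi.smul_apply, smul_eq_mul, MA, Matrix.mulVec, dotProduct, Fin.sum_univ_six, Matrix.of_apply, vec6_app0, vec6_app1, vec6_app2, vec6_app3, vec6_app4, vec6_app5]; try ring)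
    rw [hbr]
    exact master 1 0 (-1/2) 0 one_ne_zero (Or.inr (by norm_num)) _ (fun x y z => by rw [tri_app, tri_app]; ring)
  · intro p hp
    have hbr : k8 p (-p/2) 0 = braa (MA p 0 0 1) := by
      refine LinearMap.ext fun x => LinearMap.ext fun y => V6ext _ _ ?_ ?_ ?_ ?_ ?_ ?_ <;>
        (simp only [k1, k8, k11, k17, k19, braa, LinearMap.mk₂_apply, Pi.sub_apply, Pi.smul_apply, smul_eq_mul, MA, Matrix.mulVec, dotProduct, Fin.sum_univ_six, Matrix.of_apply, vec6_app0, vec6_app1, vec6_app2, vec6_app3, vec6_app4, vec6_app5]; try ring)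
    rw [hbr]
    exact master p 0 0 1 hp (Or.inl rfl) _ (fun x y z => by rw [tri_app, tri_app]; ring)
  · intro p hp
    have hbr : k8 p (-p/2) (-p/2) = braa (MA p 0 (-p/2) 1) := by
      refine LinearMap.ext fun x => LinearMap.ext fun y => V6ext _ _ ?_ ?_ ?_ ?_ ?_ ?_ <;>
        (simp only [k1, k8, k11, k17, k19, braa, LinearMap.mk₂_apply, Pi.sub_apply, Pi.smul_apply, smul_eq_mul, MA, Matrix.mulVec, dotProduct, Fin.sum_univ_six, Matrix.of_apply, vec6_app0, vec6_app1, vec6_app2, vec6_app3, vec6_app4, vec6_app5]; try ring)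
    rw [hbr]
    exact master p 0 (-p/2) 1 hp (Or.inr (by ring)) _ (fun x y z => by rw [tri_app, tri_app]; ring)
  · intro p s hp _ _
    have hbr : k11 p (-p/2) 0 s = braa (MA p 1 0 s) := by
      refine LinearMap.ext fun x => LinearMap.ext fun y => V6ext _ _ ?_ ?_ ?_ ?_ ?_ ?_ <;>
        (simp only [k1, k8, k11, k17, k19, braa, LinearMap.mk₂_apply, Pi.sub_apply, Pi.smul_apply, smul_eq_mul, MA, Matrix.mulVec, dotProduct, Fin.sum_univ_six, Matrix.of_apply, vec6_app0, vec6_app1, vec6_app2, vec6_app3, vec6_app4, vec6_app5]; try ring)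
    rw [hbr]
    exact master p 1 0 s hp (Or.inl rfl) _ (fun x y z => by rw [tri_app, tri_app]; ring)
  · intro p s hp _ _
    have hbr : k11 p (-p/2) (-p/2) s = braa (MA p 1 (-p/2) s) := by
      refine LinearMap.ext fun x => LinearMap.ext fun y => V6ext _ _ ?_ ?_ ?_ ?_ ?_ ?_ <;>
        (simp only [k1, k8, k11, k17, k19, braa, LinearMap.mk₂_apply, Pi.sub_apply, Pi.smul_apply, smul_eq_mul, MA, Matrix.mulVec, dotProduct, Fin.sum_univ_six, Matrix.of_apply, vec6_app0, vec6_app1, vec6_app2, vec6_app3, vec6_app4, vec6_app5]; try ring)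
    rw [hbr]
    exact master p 1 (-p/2) s hp (Or.inr (by ring)) _ (fun x y z => by rw [tri_app, tri_app]; ring)
  · have hbr : k17 (-1/2) = braa (MA 1 0 0 0) := by
      refine LinearMap.ext fun x => LinearMap.ext fun y => V6ext _ _ ?_ ?_ ?_ ?_ ?_ ?_ <;>
        (simp only [k1, k8, k11, k17, k19, braa, LinearMap.mk₂_apply, Pi.sub_apply, Pi.smul_apply, smul_eq_mul, MA, Matrix.mulVec, dotProduct, Fin.sum_univ_six, Matrix.of_apply, vec6_app0, vec6_app1, vec6_app2, vec6_app3, vec6_app4, vec6_app5]; try ring)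
    rw [hbr]
    exact master 1 0 0 0 one_ne_zero (Or.inl rfl) _ (fun x y z => by rw [tri_app, tri_app]; ring)
  · intro p hp
    have hbr : k19 p (-p/2) = braa (MA p 1 0 0) := by
      refine LinearMap.ext fun x => LinearMap.ext fun y => V6ext _ _ ?_ ?_ ?_ ?_ ?_ ?_ <;>
        (simp only [k1, k8, k11, k17, k19, braa, LinearMap.mk₂_apply, Pi.sub_apply, Pi.smul_apply, smul_eq_mul, MA, Matrix.mulVec, dotProduct, Fin.sum_univ_six, Matrix.of_apply, vec6_app0, vec6_app1, vec6_app2, vec6_app3, vec6_app4, vec6_app5]; try ring)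
    rw [hbr]
    exact master p 1 0 0 hp (Or.inl rfl) _ (fun x y z => by rw [tri_app, tri_app]; ring)
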